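/- Aubin–Cellina convergence theorem: Let X and Y be real Banach spaces and F : X → 2^Y a multifunction whose values are nonempty, closed and convex subsets of Y, and which is upper semicontinuous from X (strong topology) into Y endowed with the weak topology. Let T > 0 and let xₙ : (0,T) → X, yₙ : (0,T) → Y, n ∈ ℕ, be measurable functions such that xₙ(t) → x(t) for almost every t ∈ (0,T) for some function x : (0,T) → X, yₙ → y weakly in L¹(0,T;Y) for some y : (0,T) → Y, and yₙ(t) ∈ F(xₙ(t)) for all n ∈ ℕ and almost all t ∈ (0,T). Then y(t) ∈ F(x(t)) for almost every t ∈ (0,T). -/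

import Mathlib

open Filter Topology MeasureTheory Set Metric

noncomputable section

lemma aubin_real_density {A : Set ℝ} {t₀ : ℝ}
    (h : Tendsto (fun r => volume (A ∩ closedBall t₀ r) / volume (closedBall t₀ r))
      (𝓝[>] (0:ℝ)) (𝓝 1)) :
    Tendsto (fun r => (volume (A ∩ closedBall t₀ r)).toReal / (2*r)) (𝓝[>] (0:ℝ)) (𝓝 1) := by
  have h2 := (ENNReal.tendsto_toReal ENNReal.one_ne_top).comp h
  simp only [ENNReal.toReal_one] at h2
  refine h2.congr' ?_
  filter_upwards [self_mem_nhdsWithin] with r (hr : 0 < r)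
  simp only [Function.comp_apply, ENNReal.toReal_div, Real.volume_closedBall,
    ENNReal.toReal_ofReal (by linarith : (0:ℝ) ≤ 2*r)]

lemma aubin_density_inter {A B : Set ℝ} {t₀ : ℝ} (hB : MeasurableSet B)
    (hA1 : Tendsto (fun r => (volume (A ∩ closedBall t₀ r)).toReal / (2*r)) (𝓝[>] (0:ℝ)) (𝓝 1))
    (hB1 : Tendsto (fun r => (volume (B ∩ closedBall t₀ r)).toReal / (2*r)) (𝓝[>] (0:ℝ)) (𝓝 1)) :
    Tendsto (fun r => (volume ((A ∩ B) ∩ closedBall t₀ r)).toReal / (2*r)) (𝓝[>] (0:ℝ)) (𝓝 1) := by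
  have hlo : Tendsto (fun r => (volume (A ∩ closedBall t₀ r)).toReal / (2*r)
      + (volume (B ∩ closedBall t₀ r)).toReal / (2*r) - 1) (𝓝[>] (0:ℝ)) (𝓝 1) := by
    have := (hA1.add hB1).sub_const 1
    norm_num at this
    exact this
  refine tendsto_of_tendsto_of_tendsto_of_le_of_le' hlo hA1 ?_ ?_
  · filter_upwards [self_mem_nhdsWithin] with r (hr : 0 < r)
    have h2r : (0:ℝ) < 2*r := by linarith
    have hcB : volume (closedBall t₀ r) = ENNReal.ofReal (2*r) := Real.volume_closedBall t₀ r
    have hfinA : volume (A ∩ closedBall t₀ r) ≠ ⊤ :=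
      ((measure_mono inter_subset_right).trans_lt (by rw [hcB]; exact ENNReal.ofReal_lt_top)).ne
    have hfinB : volume (B ∩ closedBall t₀ r) ≠ ⊤ :=
      ((measure_mono inter_subset_right).trans_lt (by rw [hcB]; exact ENNReal.ofReal_lt_top)).ne
    have hfinAB : volume ((A ∩ B) ∩ closedBall t₀ r) ≠ ⊤ :=
      ((measure_mono inter_subset_right).trans_lt (by rw [hcB]; exact ENNReal.ofReal_lt_top)).ne
    have key : volume (A ∩ closedBall t₀ r) + volume (B ∩ closedBall t₀ r)
        ≤ volume ((A ∩ B) ∩ closedBall t₀ r) + ENNReal.ofReal (2*r) := by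
      have hmu := measure_union_add_inter (μ := volume) (t := B ∩ closedBall t₀ r) (A ∩ closedBall t₀ r)
        (hB.inter measurableSet_closedBall)
      have hset : (A ∩ closedBall t₀ r) ∩ (B ∩ closedBall t₀ r) = (A ∩ B) ∩ closedBall t₀ r := by
        ext t; simp only [mem_inter_iff]; tauto
      rw [hset] at hmu
      rw [← hmu, add_comm]
      gcongr
      rw [← hcB]
      exact measure_mono (union_subset inter_subset_right inter_subset_right)
    have key' : (volume (A ∩ closedBall t₀ r)).toReal + (volume (B ∩ closedBall t₀ r)).toReal
        ≤ (volume ((A ∩ B) ∩ closedBall t₀ r)).toReal + 2*r := by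
      have := ENNReal.toReal_mono (ENNReal.add_ne_top.2 ⟨hfinAB, ENNReal.ofReal_ne_top⟩) key
      rwa [ENNReal.toReal_add hfinA hfinB, ENNReal.toReal_add hfinAB ENNReal.ofReal_ne_top,
        ENNReal.toReal_ofReal h2r.le] at this
    rw [← add_div, sub_le_iff_le_add, div_add' _ _ _ h2r.ne']
    exact div_le_div_of_nonneg_right (by linarith) h2r.le
  · filter_upwards [self_mem_nhdsWithin] with r (hr : 0 < r)
    have h2r : (0:ℝ) < 2*r := by linarith
    have hcB : volume (closedBall t₀ r) = ENNReal.ofReal (2*r) := Real.volume_closedBall t₀ r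
    have hfinA : volume (A ∩ closedBall t₀ r) ≠ ⊤ :=
      ((measure_mono inter_subset_right).trans_lt (by rw [hcB]; exact ENNReal.ofReal_lt_top)).ne
    exact div_le_div_of_nonneg_right
      (ENNReal.toReal_mono hfinA (measure_mono (inter_subset_inter_left _ inter_subset_left)))
      h2r.le

/-- **Aubin–Cellina convergence theorem.** Let `X`, `Y` be real Banach spaces and
`F : X → 2^Y` a multifunction with nonempty, closed and convex values which is upper
semicontinuous from `X` (strong topology) into `Y` endowed with the weak topology (i.e. for
every weakly open `O ⊆ Y` the set `{x | F x ⊆ O}` is open). Let `T > 0` and let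
`xₙ : (0,T) → X`, `yₙ : (0,T) → Y` be measurable functions such that `xₙ(t) → x(t)` for a.e.
`t`, `yₙ → y` weakly in `L¹(0,T;Y)` (i.e. the pairings against every `g ∈ L^∞(0,T;Y*)`
converge), and `yₙ(t) ∈ F(xₙ(t))` for all `n` and a.e. `t`. Then `y(t) ∈ F(x(t))` for a.e.
`t ∈ (0,T)`. -/
theorem aubin_cellina
    {X Y : Type*}
    [NormedAddCommGroup X] [NormedSpace ℝ X] [CompleteSpace X]
    [NormedAddCommGroup Y] [NormedSpace ℝ Y] [CompleteSpace Y]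
    (F : X → Set Y)
    (hF_ne : ∀ x, (F x).Nonempty)
    (hF_cl : ∀ x, IsClosed (F x))
    (hF_cv : ∀ x, Convex ℝ (F x))
    (hF_usc : ∀ O : Set Y, IsOpen (show Set (WeakSpace ℝ Y) from O) →
      IsOpen {x : X | F x ⊆ O})
    (T : ℝ) (hT : 0 < T)
    (x : ℕ → ℝ → X) (y : ℕ → ℝ → Y) (xlim : ℝ → X) (ylim : ℝ → Y)
    (hx_meas : ∀ n, AEStronglyMeasurable (x n) (volume.restrict (Ioc (0 : ℝ) T)))
    (hy_meas : ∀ n, AEStronglyMeasurable (y n) (volume.restrict (Ioc (0 : ℝ) T)))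
    (hy_int : ∀ n, Integrable (y n) (volume.restrict (Ioc (0 : ℝ) T)))
    (hylim_int : Integrable ylim (volume.restrict (Ioc (0 : ℝ) T)))
    (hx_ae : ∀ᵐ t ∂(volume.restrict (Ioc (0 : ℝ) T)),
      Tendsto (fun n => x n t) atTop (𝓝 (xlim t)))
    (hy_weak : ∀ g : ℝ → (Y →L[ℝ] ℝ), MemLp g ⊤ (volume.restrict (Ioc (0 : ℝ) T)) →
      Tendsto (fun n => ∫ t in Ioc (0 : ℝ) T, (g t) (y n t)) atTop
        (𝓝 (∫ t in Ioc (0 : ℝ) T, (g t) (ylim t))))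
    (h_mem : ∀ n, ∀ᵐ t ∂(volume.restrict (Ioc (0 : ℝ) T)), y n t ∈ F (x n t)) :
    ∀ᵐ t ∂(volume.restrict (Ioc (0 : ℝ) T)), ylim t ∈ F (xlim t) := by
  classical
  have hImeas : MeasurableSet (Ioc (0:ℝ) T) := measurableSet_Ioc
  set I : Set ℝ := Ioc (0:ℝ) T with hIdef
  set μ : Measure ℝ := volume.restrict I with hμdef
  -- measurable representatives
  set xm : ℕ → ℝ → X := fun n => (hx_meas n).mk (x n) with hxmdef
  have hxm : ∀ n, StronglyMeasurable (xm n) := fun n => (hx_meas n).stronglyMeasurable_mk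
  have hxm_ae : ∀ n, x n =ᵐ[μ] xm n := fun n => (hx_meas n).ae_eq_mk
  have hxlim_aesm : AEStronglyMeasurable xlim μ :=
    aestronglyMeasurable_of_tendsto_ae atTop hx_meas hx_ae
  set xl : ℝ → X := hxlim_aesm.mk xlim with hxldef
  have hxl_sm : StronglyMeasurable xl := hxlim_aesm.stronglyMeasurable_mk
  have hxl_ae : xlim =ᵐ[μ] xl := hxlim_aesm.ae_eq_mk
  have hyl_aesm : AEStronglyMeasurable ylim μ := hylim_int.aestronglyMeasurable
  set yl : ℝ → Y := hyl_aesm.mk ylim with hyldef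
  have hyl_sm : StronglyMeasurable yl := hyl_aesm.stronglyMeasurable_mk
  have hyl_ae : ylim =ᵐ[μ] yl := hyl_aesm.ae_eq_mk
  -- extension of ylim to ℝ
  set yh : ℝ → Y := I.indicator yl with hyhdef
  have hyh_int : Integrable yh volume := by
    rw [hyhdef, integrable_indicator_iff hImeas]
    exact hylim_int.congr hyl_ae
  have hyh_loc : LocallyIntegrable yh volume := hyh_int.locallyIntegrable
  -- a.e. convergence of the representatives
  have hxm_tendsto0 : ∀ᵐ t ∂μ, Tendsto (fun n => xm n t) atTop (𝓝 (xl t)) := by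
    filter_upwards [hx_ae, hxl_ae, ae_all_iff.2 hxm_ae] with t h1 h2 h3
    rw [← h2]
    exact h1.congr h3
  have hxm_tendsto : ∀ᵐ t ∂volume, t ∈ I → Tendsto (fun n => xm n t) atTop (𝓝 (xl t)) :=
    (ae_restrict_iff' hImeas).1 hxm_tendsto0
  have hIfin : volume I ≠ ⊤ := by
    rw [hIdef, Real.volume_Ioc]
    exact ENNReal.ofReal_ne_top
  -- Egorov sets
  have hEgorov : ∀ m : ℕ, ∃ E, E ⊆ I ∧ MeasurableSet E ∧
      volume (I \ E) ≤ ENNReal.ofReal (1/(m+1)) ∧ TendstoUniformlyOn xm xl atTop E := by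
    intro m
    obtain ⟨s, hsub, hsm, hsμ, hunif⟩ := tendstoUniformlyOn_of_ae_tendsto (μ := volume)
      hxm hxl_sm hImeas hIfin hxm_tendsto (ε := 1/(m+1)) (by positivity)
    refine ⟨I \ s, diff_subset, hImeas.diff hsm, ?_, hunif⟩
    refine le_trans (measure_mono ?_) hsμ
    rw [diff_diff_right_self]
    exact inter_subset_right
  choose E hE_sub hE_meas hE_small hE_unif using hEgorov
  have hEunion : ∀ᵐ t ∂μ, t ∈ ⋃ m, E m := by
    have h0 : volume (I \ ⋃ m, E m) = 0 := by
      by_contra hne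
      have hfin : volume (I \ ⋃ m, E m) ≠ ⊤ :=
        ((measure_mono diff_subset).trans_lt (lt_top_iff_ne_top.2 hIfin)).ne
      obtain ⟨m, hm⟩ := exists_nat_one_div_lt (ENNReal.toReal_pos hne hfin)
      have hle : volume (I \ ⋃ k, E k) ≤ ENNReal.ofReal (1/(m+1)) :=
        le_trans (measure_mono (diff_subset_diff_right (subset_iUnion E m))) (hE_small m)
      have : volume (I \ ⋃ k, E k) < volume (I \ ⋃ k, E k) := by
        calc volume (I \ ⋃ k, E k) ≤ ENNReal.ofReal (1/(m+1)) := hle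
          _ < ENNReal.ofReal ((volume (I \ ⋃ k, E k)).toReal) := by
              exact ENNReal.ofReal_lt_ofReal_iff_of_nonneg (by positivity) |>.2 hm
          _ = volume (I \ ⋃ k, E k) := ENNReal.ofReal_toReal hfin
      exact lt_irrefl _ this
    have hμ0 : μ ((⋃ m, E m)ᶜ) = 0 := by
      rw [hμdef, Measure.restrict_apply (MeasurableSet.iUnion hE_meas).compl]
      rw [show (⋃ m, E m)ᶜ ∩ I = I \ ⋃ m, E m by rw [diff_eq, inter_comm]]
      exact h0
    refine ae_iff.2 ?_
    have hset : {a : ℝ | ¬ a ∈ ⋃ m, E m} = (⋃ m, E m)ᶜ := rfl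
    rw [hset]
    exact hμ0
  -- countable dense subset of the range of xl
  obtain ⟨D, hD_count, hD_dense⟩ := hxl_sm.isSeparable_range
  -- approximate continuity sets
  set S : X → ℕ → Set ℝ := fun q k => I ∩ {t | ‖xl t - q‖ < 1/(k+1)} with hSdef
  have hS_meas : ∀ q k, MeasurableSet (S q k) := by
    intro q k
    exact hImeas.inter
      (measurableSet_lt (hxl_sm.sub stronglyMeasurable_const).norm.measurable measurable_const)
  -- density facts
  have hdensE : ∀ᵐ t ∂μ, ∀ m : ℕ, t ∈ E m →
      Tendsto (fun r => volume (E m ∩ closedBall t r) / volume (closedBall t r))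
        (𝓝[>] (0:ℝ)) (𝓝 1) := by
    rw [ae_all_iff]
    intro m
    refine ae_restrict_of_ae ?_
    filter_upwards [Besicovitch.ae_tendsto_measure_inter_div_of_measurableSet volume (hE_meas m)]
      with t ht htm
    rwa [indicator_of_mem htm] at ht
  have hdensS : ∀ᵐ t ∂μ, ∀ q ∈ D, ∀ k : ℕ, t ∈ S q k →
      Tendsto (fun r => volume (S q k ∩ closedBall t r) / volume (closedBall t r))
        (𝓝[>] (0:ℝ)) (𝓝 1) := by
    rw [ae_ball_iff hD_count]
    intro q hq
    rw [ae_all_iff]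
    intro k
    refine ae_restrict_of_ae ?_
    filter_upwards [Besicovitch.ae_tendsto_measure_inter_div_of_measurableSet volume (hS_meas q k)]
      with t ht htm
    rwa [indicator_of_mem htm] at ht
  -- Lebesgue points of yh
  have hLeb : ∀ᵐ t ∂μ, Tendsto (fun r => ⨍ s in closedBall t r, ‖yh s - yh t‖ ∂volume)
      (𝓝[>] (0:ℝ)) (𝓝 0) := by
    refine ae_restrict_of_ae ?_
    filter_upwards [(Besicovitch.vitaliFamily volume).ae_tendsto_average_norm_sub hyh_loc] with t ht
    exact ht.comp (Besicovitch.tendsto_filterAt volume t)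
  -- the main pointwise argument
  filter_upwards [hEunion, hdensE, hdensS, hLeb, hxl_ae, hyl_ae, ae_restrict_mem hImeas]
    with t₀ ht_union ht_densE ht_densS ht_Leb ht_xl ht_yl ht_I
  by_contra hcon
  -- separation
  obtain ⟨p, σ', hps, hpy⟩ :=
    geometric_hahn_banach_closed_point (hF_cv (xlim t₀)) (hF_cl (xlim t₀)) hcon
  -- weak openness of the halfspace
  have hOopen : IsOpen (show Set (WeakSpace ℝ Y) from {v : Y | p v < σ'}) := by
    have hc : Continuous fun v : WeakSpace ℝ Y => (topDualPairing ℝ Y).flip v p :=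
      WeakBilin.eval_continuous _ p
    exact isOpen_lt hc continuous_const
  have hUopen : IsOpen {x' : X | F x' ⊆ {v : Y | p v < σ'}} := hF_usc _ hOopen
  have hmemU : xlim t₀ ∈ {x' : X | F x' ⊆ {v : Y | p v < σ'}} := fun v hv => hps v hv
  obtain ⟨δ, hδpos, hδball⟩ := Metric.isOpen_iff.1 hUopen _ hmemU
  -- choose Egorov set containing t₀
  obtain ⟨m, htm⟩ := mem_iUnion.1 ht_union
  obtain ⟨N, hN⟩ := eventually_atTop.1
    ((Metric.tendstoUniformlyOn_iff.1 (hE_unif m)) (δ/4) (by positivity))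
  -- choose approximate-continuity set containing t₀
  obtain ⟨k, hk⟩ := exists_nat_one_div_lt (show (0:ℝ) < δ/8 by positivity)
  have hxl_mem : xl t₀ ∈ closure D := hD_dense (mem_range_self t₀)
  obtain ⟨q, hqD, hq⟩ := Metric.mem_closure_iff.1 hxl_mem (1/(k+1)) (by positivity)
  have ht₀S : t₀ ∈ S q k := ⟨ht_I, by simpa [dist_eq_norm] using hq⟩
  -- the set W and its density at t₀
  set W : Set ℝ := E m ∩ S q k with hWdef
  have hW_meas : MeasurableSet W := (hE_meas m).inter (hS_meas q k)
  have hW_sub : W ⊆ I := fun t ht => hE_sub m ht.1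
  have hdW : Tendsto (fun r => (volume (W ∩ closedBall t₀ r)).toReal/(2*r)) (𝓝[>] (0:ℝ)) (𝓝 1) :=
    aubin_density_inter (hS_meas q k) (aubin_real_density (ht_densE m htm))
      (aubin_real_density (ht_densS q hqD k ht₀S))
  set c : ℝ := p (ylim t₀) with hcdef
  set Av : ℝ → ℝ := fun r => ⨍ s in closedBall t₀ r, ‖yh s - yh t₀‖ ∂volume with hAvdef
  -- the key inequality, for every small radius h
  have key : ∀ h : ℝ, 0 < h →
      (volume (W ∩ closedBall t₀ h)).toReal / (2*h) * c ≤
        σ' * ((volume (W ∩ closedBall t₀ h)).toReal / (2*h)) + ‖p‖ * Av h := by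
    intro h hh
    have h2h : (0:ℝ) < 2*h := by linarith
    set B : Set ℝ := W ∩ closedBall t₀ h with hBdef
    have hB_meas : MeasurableSet B := hW_meas.inter measurableSet_closedBall
    have hB_sub : B ⊆ I := fun t ht => hW_sub ht.1
    have hB_fin : volume B < ⊤ := (measure_mono inter_subset_right).trans_lt
      (by rw [Real.volume_closedBall]; exact ENNReal.ofReal_lt_top)
    have hmono : volume.restrict B ≤ μ := by
      rw [hμdef]; exact Measure.restrict_mono hB_sub le_rfl
    -- the test functional
    set g : ℝ → (Y →L[ℝ] ℝ) := B.indicator (fun _ => p) with hgdef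
    have hg_meas : AEStronglyMeasurable g μ :=
      ((stronglyMeasurable_const (b := p)).indicator hB_meas).aestronglyMeasurable
    have hg_mem : MemLp g ⊤ μ := by
      refine memLp_top_of_bound hg_meas ‖p‖ (ae_of_all _ fun t => ?_)
      by_cases ht : t ∈ B
      · simp [hgdef, indicator_of_mem ht]
      · simp [hgdef, indicator_of_notMem ht, norm_nonneg]
    have hpair : ∀ f : ℝ → Y, (∫ t, (g t) (f t) ∂μ) = ∫ t in B, p (f t) := by
      intro f
      have hpt : ∀ t, (g t) (f t) = B.indicator (fun s => p (f s)) t := by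
        intro t
        by_cases ht : t ∈ B
        · simp [hgdef, indicator_of_mem ht]
        · simp [hgdef, indicator_of_notMem ht]
      calc (∫ t, (g t) (f t) ∂μ) = ∫ t, B.indicator (fun s => p (f s)) t ∂μ := by simp_rw [hpt]
        _ = ∫ t in B, p (f t) ∂μ := integral_indicator hB_meas
        _ = ∫ t in B, p (f t) := by
            rw [hμdef, Measure.restrict_restrict hB_meas, inter_eq_self_of_subset_left hB_sub]
    -- bound on the approximating integrals
    have hbound : ∀ n, N ≤ n → (∫ t in B, p (y n t)) ≤ σ' * (volume B).toReal := by
      intro n hn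
      have haeμ : ∀ᵐ t ∂μ, t ∈ B → p (y n t) ≤ σ' := by
        filter_upwards [h_mem n, hxm_ae n] with t hymem hxeq htB
        have htE : t ∈ E m := htB.1.1
        have htS : t ∈ S q k := htB.1.2
        have h1 : dist (xl t) (xm n t) < δ/4 := hN n hn t htE
        have h2 : dist (xl t) (xl t₀) < δ/4 := by
          have ha : ‖xl t - q‖ < 1/(k+1) := htS.2
          calc dist (xl t) (xl t₀) ≤ dist (xl t) q + dist (xl t₀) q := dist_triangle_right _ _ _
            _ < 1/(k+1) + 1/(k+1) := by
                rw [dist_eq_norm]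
                exact add_lt_add ha hq
            _ < δ/8 + δ/8 := add_lt_add hk hk
            _ = δ/4 := by ring
        have hdist : dist (xm n t) (xlim t₀) < δ := by
          rw [ht_xl]
          calc dist (xm n t) (xl t₀) ≤ dist (xm n t) (xl t) + dist (xl t) (xl t₀) :=
              dist_triangle _ _ _
            _ < δ/4 + δ/4 := add_lt_add (by rw [dist_comm]; exact h1) h2
            _ < δ := by linarith
        have hsub : F (xm n t) ⊆ {v : Y | p v < σ'} := hδball (mem_ball.2 hdist)
        have hmemF : y n t ∈ F (xm n t) := hxeq ▸ hymem
        exact (hsub hmemF).le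
      have haeB : ∀ᵐ t ∂(volume.restrict B), p (y n t) ≤ σ' := by
        filter_upwards [Eventually.filter_mono (ae_mono hmono) haeμ, ae_restrict_mem hB_meas]
          with t ht1 ht2 using ht1 ht2
      have hint : Integrable (fun t => p (y n t)) (volume.restrict B) :=
        (p.integrable_comp (hy_int n)).mono_measure hmono
      calc (∫ t in B, p (y n t)) ≤ ∫ t in B, σ' ∂volume :=
          integral_mono_ae hint (integrableOn_const hB_fin.ne) haeB
        _ = σ' * (volume B).toReal := by rw [setIntegral_const, smul_eq_mul, mul_comm, measureReal_def]
    -- pass to the limit in n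
    have hweak := hy_weak g hg_mem
    have hWn : (fun n => ∫ t, (g t) (y n t) ∂μ) = fun n => ∫ t in B, p (y n t) :=
      funext fun n => hpair (y n)
    rw [hWn, hpair ylim] at hweak
    have hlim_le : (∫ t in B, p (ylim t)) ≤ σ' * (volume B).toReal :=
      le_of_tendsto hweak (eventually_atTop.2 ⟨N, hbound⟩)
    -- error estimate via the Lebesgue point
    have hclo_fin : volume (closedBall t₀ h) < ⊤ := by
      rw [Real.volume_closedBall]; exact ENNReal.ofReal_lt_top
    have hyh_cb : IntegrableOn (fun s => ‖yh s - yh t₀‖) (closedBall t₀ h) volume :=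
      ((hyh_int.integrableOn).sub (integrableOn_const hclo_fin.ne)).norm
    have hyh_B : IntegrableOn (fun s => ‖yh s - yh t₀‖) B volume :=
      hyh_cb.mono_set inter_subset_right
    have hyl_B : ∀ᵐ t ∂(volume.restrict B), ylim t = yh t := by
      filter_upwards [Eventually.filter_mono (ae_mono hmono) hyl_ae, ae_restrict_mem hB_meas]
        with t ht1 ht2
      rw [ht1, hyhdef, indicator_of_mem (hB_sub ht2)]
    have hyh_t₀ : yh t₀ = ylim t₀ := by rw [hyhdef, indicator_of_mem ht_I, ← ht_yl]
    have hint_yl : Integrable (fun t => p (ylim t)) (volume.restrict B) :=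
      (p.integrable_comp hylim_int).mono_measure hmono
    have e1 : (∫ t in B, (c - p (ylim t))) = (volume B).toReal * c - ∫ t in B, p (ylim t) := by
      rw [integral_sub (integrableOn_const (C := c) hB_fin.ne) hint_yl, setIntegral_const,
        smul_eq_mul, measureReal_def]
    have e2 : (∫ t in B, (c - p (ylim t))) ≤ ∫ t in B, ‖p‖ * ‖yh t - yh t₀‖ := by
      refine integral_mono_ae ((integrableOn_const hB_fin.ne).sub hint_yl)
        (hyh_B.const_mul ‖p‖) ?_
      filter_upwards [hyl_B] with t hteq
      calc c - p (ylim t) = p (ylim t₀ - ylim t) := by rw [hcdef, map_sub]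
        _ ≤ ‖p (ylim t₀ - ylim t)‖ := by rw [Real.norm_eq_abs]; exact le_abs_self _
        _ ≤ ‖p‖ * ‖ylim t₀ - ylim t‖ := p.le_opNorm _
        _ = ‖p‖ * ‖yh t - yh t₀‖ := by rw [hteq, hyh_t₀, norm_sub_rev]
    have e3 : (∫ t in B, ‖p‖ * ‖yh t - yh t₀‖) ≤ ‖p‖ * ((2*h) * Av h) := by
      rw [integral_const_mul]
      have hsub2 : (∫ t in B, ‖yh t - yh t₀‖) ≤ ∫ t in closedBall t₀ h, ‖yh t - yh t₀‖ :=
        setIntegral_mono_set hyh_cb (ae_of_all _ fun t => norm_nonneg _)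
          (HasSubset.Subset.eventuallyLE inter_subset_right)
      have havg : (∫ t in closedBall t₀ h, ‖yh t - yh t₀‖) = (2*h) * Av h := by
        simp only [hAvdef]
        rw [setAverage_eq, measureReal_def, Real.volume_closedBall, ENNReal.toReal_ofReal h2h.le, smul_eq_mul]
        field_simp
      exact mul_le_mul_of_nonneg_left (hsub2.trans_eq havg) (norm_nonneg p)
    have hkey2 : (volume B).toReal * c ≤ σ' * (volume B).toReal + ‖p‖ * ((2*h)*Av h) := by
      have := e1 ▸ (e2.trans e3)
      linarith [hlim_le]
    have hfin := div_le_div_of_nonneg_right hkey2 h2h.le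
    calc (volume B).toReal / (2*h) * c = ((volume B).toReal * c)/(2*h) :=
        div_mul_eq_mul_div _ _ _
      _ ≤ (σ' * (volume B).toReal + ‖p‖*((2*h)*Av h))/(2*h) := hfin
      _ = σ' * ((volume B).toReal/(2*h)) + ‖p‖ * Av h := by
          field_simp
  -- pass to the limit h → 0⁺
  have hlim1 : Tendsto (fun h => (volume (W ∩ closedBall t₀ h)).toReal/(2*h) * c)
      (𝓝[>] (0:ℝ)) (𝓝 c) := by simpa using hdW.mul_const c
  have hlim2 : Tendsto (fun h => σ' * ((volume (W ∩ closedBall t₀ h)).toReal/(2*h)) + ‖p‖ * Av h)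
      (𝓝[>] (0:ℝ)) (𝓝 σ') := by
    have := (hdW.const_mul σ').add (ht_Leb.const_mul ‖p‖)
    simpa using this
  have hle : c ≤ σ' := by
    refine le_of_tendsto_of_tendsto hlim1 hlim2 ?_
    filter_upwards [self_mem_nhdsWithin] with h hh
    exact key h hh
  exact absurd hpy (not_lt.2 hle)
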